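/- Let X be the vector field of the Lotka-Volterra system ẋ = x(1+ax+by+cz), ẏ = y(-1+dx+ey+fz), ż = z(1+gx+hy+kz) with e ≠ 0, satisfying the nine conditions ab-de=0, ac-2ak+gk=0, ae+ah-de-eg=0, af+ak-dk-gk=0, bd+bg-de-dh=0, bf-ch-fh+hk=0, bk-ce+ek-hk=0, cd+cg-2dk+fg-gk=0, ef-hk=0. Then on the region where ℓ = 1+ax-ey+kz > 0, the functions φ₁ = x·y·ℓ^(-1-b/e) and φ₂ = y·z·ℓ^(-1-h/e) are first integrals of X, i.e., X(φ₁) = 0 and X(φ₂) = 0. -/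

import Mathlib

private lemma hderivA (c u q α t : ℝ) (hpos : 0 < u + q*t) :
    deriv (fun s => s * c * (u + q*s) ^ α) t
      = c * (u + q*t) ^ α + t * c * (α * (u + q*t) ^ (α - 1) * q) := by
  have hL : HasDerivAt (fun s : ℝ => u + q*s) q t := by
    simpa using (((hasDerivAt_id t).const_mul q).const_add u)
  have hR : HasDerivAt (fun s : ℝ => (u + q*s) ^ α)
      (α * (u + q*t) ^ (α - 1) * q) t := by
    have := (Real.hasDerivAt_rpow_const (x := u + q*t) (p := α)
      (Or.inl hpos.ne')).comp t hL
    simpa [Function.comp_def, mul_assoc] using this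
  have := ((hasDerivAt_id t).mul_const c).mul hR
  simpa [Pi.mul_def] using this.deriv

private lemma hderivB (c u q α t : ℝ) (hpos : 0 < u + q*t) :
    deriv (fun s => c * s * (u + q*s) ^ α) t
      = c * (u + q*t) ^ α + c * t * (α * (u + q*t) ^ (α - 1) * q) := by
  have hL : HasDerivAt (fun s : ℝ => u + q*s) q t := by
    simpa using (((hasDerivAt_id t).const_mul q).const_add u)
  have hR : HasDerivAt (fun s : ℝ => (u + q*s) ^ α)
      (α * (u + q*t) ^ (α - 1) * q) t := by
    have := (Real.hasDerivAt_rpow_const (x := u + q*t) (p := α)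
      (Or.inl hpos.ne')).comp t hL
    simpa [Function.comp_def, mul_assoc] using this
  have := (((hasDerivAt_id t).const_mul c)).mul hR
  simpa [mul_comm, Pi.mul_def] using this.deriv

private lemma hderivC (c u q α t : ℝ) (hpos : 0 < u + q*t) :
    deriv (fun s => c * (u + q*s) ^ α) t
      = c * (α * (u + q*t) ^ (α - 1) * q) := by
  have hL : HasDerivAt (fun s : ℝ => u + q*s) q t := by
    simpa using (((hasDerivAt_id t).const_mul q).const_add u)
  have hR : HasDerivAt (fun s : ℝ => (u + q*s) ^ α)
      (α * (u + q*t) ^ (α - 1) * q) t := by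
    have := (Real.hasDerivAt_rpow_const (x := u + q*t) (p := α)
      (Or.inl hpos.ne')).comp t hL
    simpa [Function.comp_def, mul_assoc] using this
  simpa using (hR.const_mul c).deriv

/-- Case 1 of the (1:-1:1)-resonance classification: under the nine integrability
conditions and `e ≠ 0`, on the region where `ℓ = 1 + a x - e y + k z > 0`, the functions
`φ₁ = x y ℓ^(-1-b/e)` and `φ₂ = y z ℓ^(-1-h/e)` are first integrals. -/
theorem stmt1 (a b c d e f g h k : ℝ) (he : e ≠ 0)
    (h1 : a*b - d*e = 0) (h2 : a*c - 2*a*k + g*k = 0)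
    (h3 : a*e + a*h - d*e - e*g = 0) (h4 : a*f + a*k - d*k - g*k = 0)
    (h5 : b*d + b*g - d*e - d*h = 0) (h6 : b*f - c*h - f*h + h*k = 0)
    (h7 : b*k - c*e + e*k - h*k = 0) (h8 : c*d + c*g - 2*d*k + f*g - g*k = 0)
    (h9 : e*f - h*k = 0) :
    ∀ x y z : ℝ, 0 < 1 + a*x - e*y + k*z →
      ((x*(1 + a*x + b*y + c*z)) *
          deriv (fun t => t * y * (1 + a*t - e*y + k*z) ^ (-1 - b/e)) x
        + (y*(-1 + d*x + e*y + f*z)) *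
          deriv (fun t => x * t * (1 + a*x - e*t + k*z) ^ (-1 - b/e)) y
        + (z*(1 + g*x + h*y + k*z)) *
          deriv (fun t => x * y * (1 + a*x - e*y + k*t) ^ (-1 - b/e)) z = 0)
      ∧
      ((x*(1 + a*x + b*y + c*z)) *
          deriv (fun t => y * z * (1 + a*t - e*y + k*z) ^ (-1 - h/e)) x
        + (y*(-1 + d*x + e*y + f*z)) *
          deriv (fun t => t * z * (1 + a*x - e*t + k*z) ^ (-1 - h/e)) y
        + (z*(1 + g*x + h*y + k*z)) *
          deriv (fun t => y * t * (1 + a*x - e*y + k*t) ^ (-1 - h/e)) z = 0) := by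
  intro x y z hpos
  have hb1 : (fun t : ℝ => t * y * (1 + a*t - e*y + k*z) ^ (-1 - b/e))
      = (fun t : ℝ => t * y * ((1 - e*y + k*z) + a*t) ^ (-1 - b/e)) := by
    funext t; rw [show 1 + a*t - e*y + k*z = (1 - e*y + k*z) + a*t by ring]
  have hb2 : (fun t : ℝ => x * t * (1 + a*x - e*t + k*z) ^ (-1 - b/e))
      = (fun t : ℝ => x * t * ((1 + a*x + k*z) + (-e)*t) ^ (-1 - b/e)) := by
    funext t; rw [show 1 + a*x - e*t + k*z = (1 + a*x + k*z) + (-e)*t by ring]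
  have hb3 : (fun t : ℝ => x * y * (1 + a*x - e*y + k*t) ^ (-1 - b/e))
      = (fun t : ℝ => x * y * ((1 + a*x - e*y) + k*t) ^ (-1 - b/e)) := by
    funext t; rw [show ∀ t : ℝ, 1 + a*x - e*y + k*t = (1 + a*x - e*y) + k*t from fun t => by ring]
  have hc1 : (fun t : ℝ => y * z * (1 + a*t - e*y + k*z) ^ (-1 - h/e))
      = (fun t : ℝ => y * z * ((1 - e*y + k*z) + a*t) ^ (-1 - h/e)) := by
    funext t; rw [show 1 + a*t - e*y + k*z = (1 - e*y + k*z) + a*t by ring]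
  have hc2 : (fun t : ℝ => t * z * (1 + a*x - e*t + k*z) ^ (-1 - h/e))
      = (fun t : ℝ => t * z * ((1 + a*x + k*z) + (-e)*t) ^ (-1 - h/e)) := by
    funext t; rw [show 1 + a*x - e*t + k*z = (1 + a*x + k*z) + (-e)*t by ring]
  have hc3 : (fun t : ℝ => y * t * (1 + a*x - e*y + k*t) ^ (-1 - h/e))
      = (fun t : ℝ => y * t * ((1 + a*x - e*y) + k*t) ^ (-1 - h/e)) := by
    funext t; rw [show ∀ t : ℝ, 1 + a*x - e*y + k*t = (1 + a*x - e*y) + k*t from fun t => by ring]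
  have p1 : 0 < (1 - e*y + k*z) + a*x := by linarith
  have p2 : 0 < (1 + a*x + k*z) + (-e)*y := by linarith
  have p3 : 0 < (1 + a*x - e*y) + k*z := by linarith
  have e1 : (1 - e*y + k*z) + a*x = 1 + a*x - e*y + k*z := by ring
  have e2 : (1 + a*x + k*z) + (-e)*y = 1 + a*x - e*y + k*z := by ring
  have e3 : (1 + a*x - e*y) + k*z = 1 + a*x - e*y + k*z := by ring
  rw [hb1, hb2, hb3, hc1, hc2, hc3,
    hderivA y (1 - e*y + k*z) a (-1 - b/e) x p1,
    hderivB x (1 + a*x + k*z) (-e) (-1 - b/e) y p2,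
    hderivC (x*y) (1 + a*x - e*y) k (-1 - b/e) z p3,
    hderivC (y*z) (1 - e*y + k*z) a (-1 - h/e) x p1,
    hderivA z (1 + a*x + k*z) (-e) (-1 - h/e) y p2,
    hderivB y (1 + a*x - e*y) k (-1 - h/e) z p3,
    e1, e2, e3]
  have hA1 : (1 + a*x - e*y + k*z) ^ (-1 - b/e)
      = (1 + a*x - e*y + k*z) ^ (-1 - b/e - 1) * (1 + a*x - e*y + k*z) := by
    rw [← Real.rpow_add_one hpos.ne' (-1 - b/e - 1)]; norm_num
  have hA2 : (1 + a*x - e*y + k*z) ^ (-1 - h/e)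
      = (1 + a*x - e*y + k*z) ^ (-1 - h/e - 1) * (1 + a*x - e*y + k*z) := by
    rw [← Real.rpow_add_one hpos.ne' (-1 - h/e - 1)]; norm_num
  rw [hA1, hA2]
  have hal1 : e * (-1 - b/e) = -(e + b) := by field_simp; ring
  have hal2 : e * (-1 - h/e) = -(e + h) := by field_simp; ring
  constructor
  · have key : e * ((x*(1 + a*x + b*y + c*z)) *
        (y * ((1 + a*x - e*y + k*z) ^ (-1 - b/e - 1) * (1 + a*x - e*y + k*z))
          + x * y * ((-1 - b/e) * (1 + a*x - e*y + k*z) ^ (-1 - b/e - 1) * a))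
      + (y*(-1 + d*x + e*y + f*z)) *
        (x * ((1 + a*x - e*y + k*z) ^ (-1 - b/e - 1) * (1 + a*x - e*y + k*z))
          + x * y * ((-1 - b/e) * (1 + a*x - e*y + k*z) ^ (-1 - b/e - 1) * (-e)))
      + (z*(1 + g*x + h*y + k*z)) *
        (x * y * ((-1 - b/e) * (1 + a*x - e*y + k*z) ^ (-1 - b/e - 1) * k))) = 0 := by
      linear_combination ((1 + a*x - e*y + k*z) ^ (-1 - b/e - 1) * x*y * (a*(x*(1 + a*x + b*y + c*z)) - e*(y*(-1 + d*x + e*y + f*z)) + k*(z*(1 + g*x + h*y + k*z)))) * hal1 + ((1 + a*x - e*y + k*z) ^ (-1 - b/e - 1) * (-a*x^3*y - b*x^2*y^2 - 2*k*x^2*y*z - x^2*y)) * h1 + ((1 + a*x - e*y + k*z) ^ (-1 - b/e - 1) * (-b*x^2*y*z)) * h2 + ((1 + a*x - e*y + k*z) ^ (-1 - b/e - 1) * (e*x^2*y*z)) * h4 + ((1 + a*x - e*y + k*z) ^ (-1 - b/e - 1) * (-k*x*y*z^2)) * h6 + ((1 + a*x - e*y + k*z) ^ (-1 - b/e - 1)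 * (e*x*y^2*z + f*x*y*z^2 - k*x*y*z^2 - x*y*z)) * h7 + ((1 + a*x - e*y + k*z) ^ (-1 - b/e - 1) * (b*x*y^2*z + c*x*y*z^2 + x*y*z)) * h9
    exact (mul_eq_zero.mp key).resolve_left he
  · have key : e * ((x*(1 + a*x + b*y + c*z)) *
        (y * z * ((-1 - h/e) * (1 + a*x - e*y + k*z) ^ (-1 - h/e - 1) * a))
      + (y*(-1 + d*x + e*y + f*z)) *
        (z * ((1 + a*x - e*y + k*z) ^ (-1 - h/e - 1) * (1 + a*x - e*y + k*z))
          + y * z * ((-1 - h/e) * (1 + a*x - e*y + k*z) ^ (-1 - h/e - 1) * (-e)))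
      + (z*(1 + g*x + h*y + k*z)) *
        (y * ((1 + a*x - e*y + k*z) ^ (-1 - h/e - 1) * (1 + a*x - e*y + k*z))
          + y * z * ((-1 - h/e) * (1 + a*x - e*y + k*z) ^ (-1 - h/e - 1) * k))) = 0 := by
      linear_combination ((1 + a*x - e*y + k*z) ^ (-1 - h/e - 1) * y*z * (a*(x*(1 + a*x + b*y + c*z)) - e*(y*(-1 + d*x + e*y + f*z)) + k*(z*(1 + g*x + h*y + k*z)))) * hal2 + ((1 + a*x - e*y + k*z) ^ (-1 - h/e - 1) * (-e*x*y^2*z - h*x*y^2*z)) * h1 + ((1 + a*x - e*y + k*z) ^ (-1 - h/e - 1) * (-e*x*y*z^2 - h*x*y*z^2)) * h2 + ((1 + a*x - e*y + k*z) ^ (-1 - h/e - 1) * (-a*x^2*y*z + e*x*y^2*z - 2*k*x*y*z^2 - x*y*z)) * h3 + ((1 + a*x - e*y + k*z) ^ (-1 - h/e - 1) * (e*x*y*z^2)) * h4 + ((1 + a*x - e*y + k*z) ^ (-1 - h/e - 1) * (-e*y^2*z^2 - k*y*z^3)) * h6 + ((1 + a*x - e*y + k*z) ^ (-1 - h/e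 - 1) * (f*y*z^3 + h*y^2*z^2)) * h7 + ((1 + a*x - e*y + k*z) ^ (-1 - h/e - 1) * (b*y^2*z^2 + c*y*z^3 + y*z^2)) * h9
    exact (mul_eq_zero.mp key).resolve_left he
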